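/- Let X be a metric space, G a group of isometries of X, and C ⊆ X a compact set. If for each a ∈ C there is δ_a > 0 such that G·a is not δ_a-bounded, and A ⊆ C is a finite set with C ⊆ ⋃_{a∈A} B_{δ_a/2}(a), then setting ε = (1/18)·min_{a∈A} δ_a, no point of C has a 9ε-bounded orbit. -/
import Mathlib


/-- `S` is `ε`-bounded if it is covered by finitely many open `ε`-balls. -/
def EBounded {X : Type*} [MetricSpace X] (S : Set X) (ε : ℝ) : Prop :=
  ∃ F : Finset X, S ⊆ ⋃ x ∈ F, Metric.ball x ε

/-- Uniformity step in the proof of Lemma 3.2: from a finite subcover of `C` by balls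
`B_{δ a / 2}(a)` with `G•a` not `δ a`-bounded, setting `ε = (1/18) min_{a ∈ A} δ a`,
no point of `C` has a `9ε`-bounded orbit. -/
theorem uniform_orbit_unboundedness {X G : Type*} [MetricSpace X] [Group G] [MulAction G X]
    (hiso : ∀ (g : G) (x y : X), dist (g • x) (g • y) = dist x y)
    (C : Set X) (hC : IsCompact C) (δ : X → ℝ)
    (hδ : ∀ a ∈ C, 0 < δ a ∧ ¬ EBounded (MulAction.orbit G a) (δ a))
    (A : Finset X) (hAne : A.Nonempty) (hAC : (A : Set X) ⊆ C)
    (hcov : C ⊆ ⋃ a ∈ A, Metric.ball a (δ a / 2)) :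
    ∀ x ∈ C, ¬ EBounded (MulAction.orbit G x) (9 * ((1 / 18) * A.inf' hAne δ)) := by
  intro x hx hEB
  obtain ⟨F, hF⟩ := hEB
  obtain ⟨a, haA, hxa⟩ := Set.mem_iUnion₂.mp (hcov hx)
  have hmin : A.inf' hAne δ ≤ δ a := Finset.inf'_le _ haA
  refine (hδ a (hAC haA)).2 ⟨F, ?_⟩
  rintro _ ⟨g, rfl⟩
  have hgx : g • x ∈ MulAction.orbit G x := ⟨g, rfl⟩
  obtain ⟨y, hyF, hy⟩ := Set.mem_iUnion₂.mp (hF hgx)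
  refine Set.mem_iUnion₂.mpr ⟨y, hyF, ?_⟩
  simp only [Metric.mem_ball] at *
  calc dist (g • a) y ≤ dist (g • a) (g • x) + dist (g • x) y := dist_triangle _ _ _
    _ = dist a x + dist (g • x) y := by rw [hiso]
    _ = dist x a + dist (g • x) y := by rw [dist_comm]
    _ < δ a / 2 + 9 * ((1 / 18) * A.inf' hAne δ) := by linarith
    _ ≤ δ a := by linarith
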